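/- arXiv:2303.10694 — 3 statements merged into one kernel-verified Lean document; each statement's English description precedes it below -/
import Mathlib

section
/- Let μ be a probability measure on a measurable space 𝒳, S : 𝒳 → ℝ a measurable score taking values in [0,1], N : 𝒳 → Set 𝒳 a neighborhood map, and c a fixed class with class-conditional coverage function q_c(t) := μ{x' : S(x') ≤ t and F*(x') = c} / μ{x' : F*(x') = c}, where F* : 𝒳 → Fin C is measurable and μ{F* = c} > 0. Fix a point x ∈ 𝒳 and a constant σ̂ ≥ 1, and suppose that for every t ∈ ℝ, μ{x' : S(x') ≤ t and x' ∈ N(x)} ≥ σ̂ · q_c(t). Then for every α̃ ∈ (0,1), the per-sample neighborhood quantile satisfies Q^NCP(α̃; x) := inf{t : μ{x' : S(x') ≤ t and x' ∈ N(x)} ≥ 1 − α̃} ≤ inf{t : q_c(t) ≥ 1 − (σ̂ − 1 + α̃)/σ̂} =: Q_class((σ̂ − 1 + α̃)/σ̂; c), provided both quantile sets are nonempty and bounded below. -/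
open MeasureTheory

/-- Step 1 connection: if the neighborhood coverage of a point `x` dominates
`σ̂` times the class-conditional coverage of its class `c`, then the
per-sample NCP quantile of `x` at level `α̃` is at most the class-wise
quantile of class `c` at the adjusted level `(σ̂ - 1 + α̃)/σ̂`. -/
theorem ncp_quantile_le_classwise_quantile
    {X : Type*} [MeasurableSpace X] (μ : Measure X) [IsProbabilityMeasure μ]
    (S : X → ℝ) (hS : Measurable S) (hS01 : ∀ z, S z ∈ Set.Icc (0 : ℝ) 1)
    (N : X → Set X)
    {C : ℕ} (F : X → Fin C) (hF : Measurable F) (c : Fin C)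
    (hc : 0 < (μ {z | F z = c}).toReal)
    (x : X) (σ : ℝ) (hσ : 1 ≤ σ)
    (hconc : ∀ t : ℝ,
      σ * ((μ {z | S z ≤ t ∧ F z = c}).toReal / (μ {z | F z = c}).toReal)
        ≤ (μ {z | S z ≤ t ∧ z ∈ N x}).toReal)
    (α : ℝ) (hα : α ∈ Set.Ioo (0 : ℝ) 1)
    (h0ne : {t : ℝ | 1 - α ≤ (μ {z | S z ≤ t ∧ z ∈ N x}).toReal}.Nonempty)
    (h0bd : BddBelow {t : ℝ | 1 - α ≤ (μ {z | S z ≤ t ∧ z ∈ N x}).toReal})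
    (h1ne : {t : ℝ | 1 - (σ - 1 + α) / σ ≤
        (μ {z | S z ≤ t ∧ F z = c}).toReal / (μ {z | F z = c}).toReal}.Nonempty)
    (h1bd : BddBelow {t : ℝ | 1 - (σ - 1 + α) / σ ≤
        (μ {z | S z ≤ t ∧ F z = c}).toReal / (μ {z | F z = c}).toReal}) :
    sInf {t : ℝ | 1 - α ≤ (μ {z | S z ≤ t ∧ z ∈ N x}).toReal}
      ≤ sInf {t : ℝ | 1 - (σ - 1 + α) / σ ≤
          (μ {z | S z ≤ t ∧ F z = c}).toReal / (μ {z | F z = c}).toReal} := by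
  have hσ0 : (0:ℝ) < σ := lt_of_lt_of_le one_pos hσ
  apply csInf_le_csInf h0bd h1ne
  intro t ht
  have hq : (1 - α) / σ ≤ (μ {z | S z ≤ t ∧ F z = c}).toReal / (μ {z | F z = c}).toReal := by
    have : 1 - (σ - 1 + α) / σ = (1 - α) / σ := by field_simp; ring
    rw [Set.mem_setOf_eq] at ht; linarith
  have h1 : 1 - α ≤ σ * ((μ {z | S z ≤ t ∧ F z = c}).toReal / (μ {z | F z = c}).toReal) := by
    have := mul_le_mul_of_nonneg_left hq hσ0.le
    rwa [mul_div_cancel₀ _ hσ0.ne'] at this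
  exact le_trans h1 (hconc t)
end

section
/- Let C ≥ 1, let p : Fin C → ℝ be a probability vector (p_c ≥ 0 for all c and Σ_c p_c = 1) with p_c ≥ P_min > 0 for every c, let α̃ ∈ [0,1], let a, b : Fin C → ℝ take values in [0,1], and let R ⊆ Fin C be a subset such that: (i) a_c ≥ 1 − α̃ for every c ∈ R; (ii) a_c ≥ b_c for every c ∉ R; (iii) Σ_c p_c · b_c ≥ 1 − α̃; and (iv) Σ_{c ∈ R} p_c ≤ 1 − P_min. Then Σ_c p_c · a_c ≥ 1 − α̃ · (2 − P_min). -/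
/-- Abstract form of the class-wise coverage comparison (Step 2): mixing the
class-conditional coverages `a c` of the class-wise quantiles over the class
probabilities `p c` yields marginal coverage at least `1 - α̃ (2 - P_min)`. -/
theorem classwise_coverage_mixing
    {C : ℕ} (hC : 1 ≤ C)
    (p : Fin C → ℝ) (hp : ∀ c, 0 ≤ p c) (hsum : ∑ c, p c = 1)
    (Pmin : ℝ) (hPmin : 0 < Pmin) (hpmin : ∀ c, Pmin ≤ p c)
    (α : ℝ) (hα : α ∈ Set.Icc (0 : ℝ) 1)
    (a b : Fin C → ℝ)
    (ha : ∀ c, a c ∈ Set.Icc (0 : ℝ) 1) (hb : ∀ c, b c ∈ Set.Icc (0 : ℝ) 1)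
    (R : Finset (Fin C))
    (hR1 : ∀ c ∈ R, 1 - α ≤ a c)
    (hR2 : ∀ c ∉ R, b c ≤ a c)
    (hbcov : 1 - α ≤ ∑ c, p c * b c)
    (hRmass : ∑ c ∈ R, p c ≤ 1 - Pmin) :
    1 - α * (2 - Pmin) ≤ ∑ c, p c * a c := by
  obtain ⟨hα0, hα1⟩ := hα
  have h1 : ∑ c ∈ R, p c * (1 - α) ≤ ∑ c ∈ R, p c * a c :=
    Finset.sum_le_sum fun c hc => mul_le_mul_of_nonneg_left (hR1 c hc) (hp c)
  have h2 : ∑ c ∈ Rᶜ, p c * b c ≤ ∑ c ∈ Rᶜ, p c * a c :=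
    Finset.sum_le_sum fun c hc =>
      mul_le_mul_of_nonneg_left (hR2 c (Finset.mem_compl.mp hc)) (hp c)
  have hsa : ∑ c ∈ R, p c * a c + ∑ c ∈ Rᶜ, p c * a c = ∑ c, p c * a c :=
    Finset.sum_add_sum_compl R _
  have hsb : ∑ c ∈ R, p c * b c + ∑ c ∈ Rᶜ, p c * b c = ∑ c, p c * b c :=
    Finset.sum_add_sum_compl R _
  have h3 : ∑ c ∈ R, p c * b c ≤ ∑ c ∈ R, p c := by
    calc ∑ c ∈ R, p c * b c ≤ ∑ c ∈ R, p c * 1 :=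
          Finset.sum_le_sum fun c _ => mul_le_mul_of_nonneg_left (hb c).2 (hp c)
      _ = ∑ c ∈ R, p c := by simp
  have h4 : ∑ c ∈ R, p c * (1 - α) = (∑ c ∈ R, p c) * (1 - α) :=
    (Finset.sum_mul ..).symm
  have hS0 : 0 ≤ ∑ c ∈ R, p c := Finset.sum_nonneg fun c _ => hp c
  nlinarith [mul_le_mul_of_nonneg_left hRmass hα0]
end

section
/- Let μ be a probability measure on a measurable space 𝒳, S : 𝒳 → ℝ a measurable score, F* : 𝒳 → Fin C a measurable label map with p_c := μ{F* = c} ≥ P_min > 0 for every class c, α̃ ∈ [0,1], Q : Fin C → ℝ a per-class threshold, and q ∈ ℝ a global threshold with μ{x : S(x) ≤ q} ≥ 1 − α̃. Let R := {c : Q(c) ≤ q} and suppose that for every c ∈ R the class-conditional coverage μ{S ≤ Q(c) and F* = c}/p_c ≥ 1 − α̃, and that Σ_{c ∈ R} p_c ≤ 1 − P_min. Then the marginal coverage of the class-dependent rule satisfies μ{x : S(x) ≤ Q(F*(x))} ≥ 1 − α̃ · (2 − P_min). -/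
open MeasureTheory

/-- Step 2 (measure-theoretic form): if the global threshold `q` has marginal
coverage at least `1 - α̃`, the class-wise thresholds `Q c` have
class-conditional coverage at least `1 - α̃` on the robust set
`R = {c | Q c ≤ q}`, and the robust set has mass at most `1 - P_min`, then the
class-dependent rule `x ↦ Q (F* x)` has marginal coverage at least
`1 - α̃ (2 - P_min)`. -/
theorem classwise_rule_marginal_coverage
    {X : Type*} [MeasurableSpace X] (μ : Measure X) [IsProbabilityMeasure μ]
    (S : X → ℝ) (hS : Measurable S)
    {C : ℕ} (F : X → Fin C) (hF : Measurable F)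
    (Pmin : ℝ) (hPmin : 0 < Pmin)
    (hpmin : ∀ c : Fin C, Pmin ≤ (μ {x | F x = c}).toReal)
    (α : ℝ) (hα : α ∈ Set.Icc (0 : ℝ) 1)
    (Q : Fin C → ℝ) (q : ℝ)
    (hq : 1 - α ≤ (μ {x | S x ≤ q}).toReal)
    (hR : ∀ c : Fin C, Q c ≤ q →
      1 - α ≤ (μ {x | S x ≤ Q c ∧ F x = c}).toReal / (μ {x | F x = c}).toReal)
    (hRmass : ∑ c ∈ Finset.univ.filter (fun c => Q c ≤ q),
        (μ {x | F x = c}).toReal ≤ 1 - Pmin) :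
    1 - α * (2 - Pmin) ≤ (μ {x | S x ≤ Q (F x)}).toReal := by
  have hα0 : 0 ≤ α := hα.1
  set A : Fin C → Set X := fun c => {x | S x ≤ Q c ∧ F x = c} with hA
  set B : Fin C → Set X := fun c => {x | S x ≤ q ∧ F x = c} with hB
  have hAm : ∀ c, MeasurableSet (A c) := fun c =>
    (hS measurableSet_Iic).inter (hF (measurableSet_singleton c))
  have hBm : ∀ c, MeasurableSet (B c) := fun c =>
    (hS measurableSet_Iic).inter (hF (measurableSet_singleton c))
  have hAd : Pairwise (Function.onFun Disjoint A) := by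
    intro c c' h
    exact Set.disjoint_left.mpr fun x hx hx' => h (hx.2.symm.trans hx'.2)
  have hBd : Pairwise (Function.onFun Disjoint B) := by
    intro c c' h
    exact Set.disjoint_left.mpr fun x hx hx' => h (hx.2.symm.trans hx'.2)
  have hfin : ∀ (s : Set X), μ s ≠ ⊤ := fun s => measure_ne_top μ s
  have hAun : (μ {x | S x ≤ Q (F x)}).toReal = ∑ c, (μ (A c)).toReal := by
    have : {x | S x ≤ Q (F x)} = ⋃ c, A c := by
      ext x
      simp only [Set.mem_iUnion, Set.mem_setOf_eq, hA]
      exact ⟨fun h => ⟨F x, h, rfl⟩, fun ⟨c, h, hc⟩ => hc ▸ h⟩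
    rw [this, measure_iUnion hAd hAm, tsum_fintype,
      ENNReal.toReal_sum (fun c _ => hfin _)]
  have hBun : (μ {x | S x ≤ q}).toReal = ∑ c, (μ (B c)).toReal := by
    have : {x | S x ≤ q} = ⋃ c, B c := by
      ext x
      simp only [Set.mem_iUnion, Set.mem_setOf_eq, hB]
      exact ⟨fun h => ⟨F x, h, rfl⟩, fun ⟨c, h, hc⟩ => h⟩
    rw [this, measure_iUnion hBd hBm, tsum_fintype,
      ENNReal.toReal_sum (fun c _ => hfin _)]
  set R : Finset (Fin C) := Finset.univ.filter (fun c => Q c ≤ q) with hRdef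
  -- bound on robust classes
  have hA_lb : ∀ c ∈ R, (1 - α) * (μ {x | F x = c}).toReal ≤ (μ (A c)).toReal := by
    intro c hc
    have hcq : Q c ≤ q := (Finset.mem_filter.mp hc).2
    have hp : 0 < (μ {x | F x = c}).toReal := lt_of_lt_of_le hPmin (hpmin c)
    have := hR c hcq
    calc (1 - α) * (μ {x | F x = c}).toReal
        ≤ ((μ (A c)).toReal / (μ {x | F x = c}).toReal) * (μ {x | F x = c}).toReal :=
          mul_le_mul_of_nonneg_right this hp.le
      _ = (μ (A c)).toReal := div_mul_cancel₀ _ hp.ne'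
  -- on non-robust classes, B ⊆ A
  have hBA : ∀ c ∈ Finset.univ \ R, (μ (B c)).toReal ≤ (μ (A c)).toReal := by
    intro c hc
    have : ¬ Q c ≤ q := by
      simpa [hRdef, Finset.mem_filter] using hc
    have hsub : B c ⊆ A c := fun x hx => ⟨hx.1.trans (le_of_lt (lt_of_not_ge this)), hx.2⟩
    exact ENNReal.toReal_mono (hfin _) (measure_mono hsub)
  have hBp : ∀ c, (μ (B c)).toReal ≤ (μ {x | F x = c}).toReal := by
    intro c
    exact ENNReal.toReal_mono (hfin _) (measure_mono fun x hx => hx.2)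
  -- arithmetic
  have hnot : Finset.univ \ R = Finset.univ.filter (fun c => ¬ Q c ≤ q) := by
    ext c; simp [hRdef]
  have hsplitA : ∑ c, (μ (A c)).toReal
      = ∑ c ∈ R, (μ (A c)).toReal + ∑ c ∈ Finset.univ \ R, (μ (A c)).toReal := by
    rw [hnot, hRdef]
    exact (Finset.sum_filter_add_sum_filter_not Finset.univ (fun c => Q c ≤ q) _).symm
  have hsplitB : ∑ c, (μ (B c)).toReal
      = ∑ c ∈ R, (μ (B c)).toReal + ∑ c ∈ Finset.univ \ R, (μ (B c)).toReal := by
    rw [hnot, hRdef]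
    exact (Finset.sum_filter_add_sum_filter_not Finset.univ (fun c => Q c ≤ q) _).symm
  have h1 : ∑ c ∈ R, (1 - α) * (μ {x | F x = c}).toReal ≤ ∑ c ∈ R, (μ (A c)).toReal :=
    Finset.sum_le_sum hA_lb
  have h2 : ∑ c ∈ Finset.univ \ R, (μ (B c)).toReal ≤ ∑ c ∈ Finset.univ \ R, (μ (A c)).toReal :=
    Finset.sum_le_sum hBA
  have h3 : ∑ c ∈ R, (μ (B c)).toReal ≤ ∑ c ∈ R, (μ {x | F x = c}).toReal :=
    Finset.sum_le_sum fun c _ => hBp c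
  rw [hAun, hsplitA]
  rw [hBun, hsplitB] at hq
  rw [← Finset.mul_sum] at h1
  have hmul : α * (∑ c ∈ R, (μ {x | F x = c}).toReal) ≤ α * (1 - Pmin) :=
    mul_le_mul_of_nonneg_left hRmass hα0
  nlinarith [h1, h2, h3, hq, hmul]
end
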